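/- arXiv:1004.5183 — 2 statements merged into one kernel-verified Lean document; each statement's English description precedes it below -/
import Mathlib

section
/- For every m ≥ 2, the theta graph θ_{2,2,2m} is not 2-monophilic: there exists an assignment L of 2-element lists to its vertices with exactly one proper coloring from L, while col(θ_{2,2,2m},2) = 2. -/
open SimpleGraph

open Classical in
/-- Number of proper colorings of `G` from list assignment `L`: functions `γ` with
`γ v ∈ L v` for all `v` and `γ v ≠ γ w` for adjacent `v, w`. -/
noncomputable def colCount {V : Type*} [Fintype V] (G : SimpleGraph V) (L : V → Finset ℕ) : ℕ :=
  ((Fintype.piFinset L).filter fun γ => ∀ v w, G.Adj v w → γ v ≠ γ w).card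

/-- `G` is `n`-monophilic: the constant assignment `{1,…,n}` minimizes the number of
list colorings among all `n`-list assignments. -/
def Monophilic {V : Type*} [Fintype V] (G : SimpleGraph V) (n : ℕ) : Prop :=
  ∀ L : V → Finset ℕ, (∀ v, (L v).card = n) →
    colCount G (fun _ => Finset.Icc 1 n) ≤ colCount G L

theorem myGetVertInj {V : Type*} {G : SimpleGraph V} {u v : V} {w : G.Walk u v}
    (h : w.IsPath) : ∀ i j : ℕ, i ≤ w.length → j ≤ w.length →
    w.getVert i = w.getVert j → i = j := by
  induction w with
  | nil => intro i j hi hj _; simp at hi hj; omega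
  | cons hadj q ih =>
    rw [Walk.cons_isPath_iff] at h
    intro i j hi hj hij
    match i, j with
    | 0, 0 => rfl
    | 0, j+1 =>
      exfalso; apply h.2
      rw [Walk.mem_support_iff_exists_getVert]
      refine ⟨j, ?_, by simp at hj; omega⟩
      rw [← Walk.getVert_cons_succ q hadj, ← hij, Walk.getVert_zero]
    | i+1, 0 =>
      exfalso; apply h.2
      rw [Walk.mem_support_iff_exists_getVert]
      refine ⟨i, ?_, by simp at hi; omega⟩
      rw [← Walk.getVert_cons_succ q hadj, hij, Walk.getVert_zero]
    | i+1, j+1 =>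
      have := ih h.1 i j (by simp at hi; omega) (by simp at hj; omega)
        (by rwa [Walk.getVert_cons_succ, Walk.getVert_cons_succ] at hij)
      omega

theorem myEdgesGetVert {V : Type*} {G : SimpleGraph V} {u v : V} (w : G.Walk u v) :
    ∀ e ∈ w.edges, ∃ i, i < w.length ∧ e = s(w.getVert i, w.getVert (i+1)) := by
  induction w with
  | nil => simp
  | cons hadj q ih =>
    intro e he
    rw [Walk.edges_cons, List.mem_cons] at he
    rcases he with he | he
    · exact ⟨0, by simp, by rw [he, Walk.getVert_zero, Walk.getVert_cons_succ, Walk.getVert_zero]⟩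
    · obtain ⟨i, hi, hei⟩ := ih e he
      exact ⟨i + 1, by simp; omega, by rwa [Walk.getVert_cons_succ, Walk.getVert_cons_succ]⟩


/-- the target value along the long path -/
def thVal (m i : ℕ) : ℕ :=
  if i = 0 then 1 else if i = 2*m then 3 else if i = 2*m-2 then 3
  else if i = 2*m-1 then 1 else if i % 2 = 1 then 2 else 1

/-- the list along the long path, as a function of the index -/
def thL (m j : ℕ) : Finset ℕ :=
  if j = 0 then {1,2} else if j = 2*m then {1,3} else if j = 2*m-2 then {2,3}
  else if j = 2*m-1 then {1,3} else {1,2}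

lemma thVal_zero (m : ℕ) : thVal m 0 = 1 := by simp [thVal]

lemma thStep (m : ℕ) (hm : 2 ≤ m) (i : ℕ) (hi : i < 2*m) (t : ℕ)
    (ht : t ∈ thL m (i+1)) (hne : t ≠ thVal m i) : t = thVal m (i+1) := by
  simp only [thL] at ht
  simp only [thVal] at hne ⊢
  split_ifs at ht hne ⊢ <;>
    first
      | exact ‹False›.elim
      | (simp only [Finset.mem_insert, Finset.mem_singleton] at ht; omega)

lemma thVal_mem (m : ℕ) (hm : 2 ≤ m) (i : ℕ) : thVal m i ∈ thL m i := by
  simp only [thL, thVal]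
  split_ifs <;> decide

lemma thVal_ne (m : ℕ) (hm : 2 ≤ m) (i : ℕ) (hi : i < 2*m) :
    thVal m i ≠ thVal m (i+1) := by
  simp only [thVal]; split_ifs <;> first | exact ‹False›.elim | omega

/-- list assignment -/
def thList {V : Type*} [DecidableEq V] (u v a b c d : V) (x : V) : Finset ℕ :=
  if x = u then {1,2} else if x = v then {1,3} else if x = a then {1,2}
  else if x = b then {2,3} else if x = c then {2,3} else if x = d then {1,3} else {1,2}

/-- the unique coloring -/
def thCol {V : Type*} [DecidableEq V] (u v a b c d : V) (ridx : V → ℕ) (x : V) : ℕ :=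
  if x = u then 1 else if x = v then 3 else if x = a then 2
  else if x = b then 2 else if x = c then 3 else if x = d then 1
  else if ridx x % 2 = 1 then 2 else 1

lemma thList_card {V : Type*} [DecidableEq V] (u v a b c d : V) (x : V) :
    (thList u v a b c d x).card = 2 := by
  unfold thList; split_ifs <;> decide

lemma thCol_mem {V : Type*} [DecidableEq V] (u v a b c d : V) (ridx : V → ℕ) (x : V) :
    thCol u v a b c d ridx x ∈ thList u v a b c d x := by
  unfold thCol thList; split_ifs <;> decide

/-- the two colorings from constant lists {1,2} -/
def thCol2 {V : Type*} [DecidableEq V] (c : ℕ) (u v a b : V) (ridx : V → ℕ) (x : V) : ℕ :=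
  if x = u then c else if x = v then c else if x = a then 3 - c
  else if x = b then 3 - c else if ridx x % 2 = 1 then 3 - c else c

theorem stmt13 {V : Type*} [Fintype V] (G : SimpleGraph V) (m : ℕ) (hm : 2 ≤ m)
    (u v : V) (huv : u ≠ v) (p q r : G.Walk u v)
    (hp : p.IsPath) (hq : q.IsPath) (hr : r.IsPath)
    (hpl : p.length = 2) (hql : q.length = 2) (hrl : r.length = 2 * m)
    (hpq : ∀ x, x ∈ p.support → x ∈ q.support → x = u ∨ x = v)
    (hpr : ∀ x, x ∈ p.support → x ∈ r.support → x = u ∨ x = v)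
    (hqr : ∀ x, x ∈ q.support → x ∈ r.support → x = u ∨ x = v)
    (hvert : ∀ x : V, x ∈ p.support ∨ x ∈ q.support ∨ x ∈ r.support)
    (hedge : ∀ e, e ∈ G.edgeSet ↔ e ∈ p.edges ∨ e ∈ q.edges ∨ e ∈ r.edges) :
    (∃ L : V → Finset ℕ, (∀ x, (L x).card = 2) ∧ colCount G L = 1) ∧
      colCount G (fun _ => ({1, 2} : Finset ℕ)) = 2 := by
  classical
  set a := p.getVert 1 with ha
  set b := q.getVert 1 with hb
  -- injectivity facts
  have pinj : ∀ i j : ℕ, i ≤ 2 → j ≤ 2 → p.getVert i = p.getVert j → i = j := by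
    intro i j hi hj; exact myGetVertInj hp i j (by omega) (by omega)
  have qinj : ∀ i j : ℕ, i ≤ 2 → j ≤ 2 → q.getVert i = q.getVert j → i = j := by
    intro i j hi hj; exact myGetVertInj hq i j (by omega) (by omega)
  have rinj : ∀ i j : ℕ, i ≤ 2*m → j ≤ 2*m → r.getVert i = r.getVert j → i = j := by
    intro i j hi hj; exact myGetVertInj hr i j (by omega) (by omega)
  -- endpoint values
  have hp2 : p.getVert 2 = v := by rw [← hpl]; exact p.getVert_length
  have hq2 : q.getVert 2 = v := by rw [← hql]; exact q.getVert_length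
  have hr2m : r.getVert (2*m) = v := by rw [← hrl]; exact r.getVert_length
  -- support characterizations
  have psupp : ∀ x ∈ p.support, x = u ∨ x = a ∨ x = v := by
    intro x hx
    obtain ⟨n, hn, hnl⟩ := Walk.mem_support_iff_exists_getVert.mp hx
    rw [hpl] at hnl
    interval_cases n
    · left; rw [← hn, Walk.getVert_zero]
    · right; left; rw [← hn]
    · right; right; rw [← hn, hp2]
  have qsupp : ∀ x ∈ q.support, x = u ∨ x = b ∨ x = v := by
    intro x hx
    obtain ⟨n, hn, hnl⟩ := Walk.mem_support_iff_exists_getVert.mp hx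
    rw [hql] at hnl
    interval_cases n
    · left; rw [← hn, Walk.getVert_zero]
    · right; left; rw [← hn]
    · right; right; rw [← hn, hq2]
  have rsupp : ∀ x ∈ r.support, ∃ i, i ≤ 2*m ∧ r.getVert i = x := by
    intro x hx
    obtain ⟨n, hn, hnl⟩ := Walk.mem_support_iff_exists_getVert.mp hx
    exact ⟨n, by omega, hn⟩
  have rmem : ∀ i, r.getVert i ∈ r.support := by
    intro i
    rcases le_or_gt i r.length with h | h
    · exact Walk.mem_support_iff_exists_getVert.mpr ⟨i, rfl, h⟩
    · rw [Walk.getVert_of_length_le r h.le]; exact Walk.end_mem_support r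
  have amem : a ∈ p.support := Walk.mem_support_iff_exists_getVert.mpr ⟨1, rfl, by omega⟩
  have bmem : b ∈ q.support := Walk.mem_support_iff_exists_getVert.mpr ⟨1, rfl, by omega⟩
  -- distinctness
  have hau : a ≠ u := by
    intro h; have := pinj 1 0 (by omega) (by omega) (by rw [Walk.getVert_zero]; exact h); omega
  have hav : a ≠ v := by
    intro h; have := pinj 1 2 (by omega) (by omega) (by rw [hp2]; exact h); omega
  have hbu : b ≠ u := by
    intro h; have := qinj 1 0 (by omega) (by omega) (by rw [Walk.getVert_zero]; exact h); omega
  have hbv : b ≠ v := by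
    intro h; have := qinj 1 2 (by omega) (by omega) (by rw [hq2]; exact h); omega
  have hanr : a ∉ r.support := by
    intro h; rcases hpr a amem h with h' | h'
    · exact hau h'
    · exact hav h'
  have hbnr : b ∉ r.support := by
    intro h; rcases hqr b bmem h with h' | h'
    · exact hbu h'
    · exact hbv h'
  have hab : a ≠ b := by
    intro h
    rcases hpq a amem (h ▸ bmem) with h' | h'
    · exact hau h'
    · exact hav h'
  -- interior vertices of r
  have rint : ∀ i, 1 ≤ i → i ≤ 2*m - 1 →
      r.getVert i ≠ u ∧ r.getVert i ≠ v ∧ r.getVert i ≠ a ∧ r.getVert i ≠ b := by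
    intro i h1 h2
    refine ⟨?_, ?_, ?_, ?_⟩
    · intro h; have := rinj i 0 (by omega) (by omega) (by rw [Walk.getVert_zero]; exact h); omega
    · intro h; have := rinj i (2*m) (by omega) (by omega) (by rw [hr2m]; exact h); omega
    · intro h; exact hanr (h ▸ rmem i)
    · intro h; exact hbnr (h ▸ rmem i)
  -- adjacencies
  have adj_ua : G.Adj u a := by
    have := p.adj_getVert_succ (i := 0) (by omega)
    rwa [Walk.getVert_zero] at this
  have adj_av : G.Adj a v := by
    have := p.adj_getVert_succ (i := 1) (by omega)
    rwa [show (1:ℕ)+1 = 2 from rfl, hp2] at this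
  have adj_ub : G.Adj u b := by
    have := q.adj_getVert_succ (i := 0) (by omega)
    rwa [Walk.getVert_zero] at this
  have adj_bv : G.Adj b v := by
    have := q.adj_getVert_succ (i := 1) (by omega)
    rwa [show (1:ℕ)+1 = 2 from rfl, hq2] at this
  have adj_r : ∀ i, i < 2*m → G.Adj (r.getVert i) (r.getVert (i+1)) := by
    intro i hi; exact r.adj_getVert_succ (by omega)
  -- index function
  set ridx : V → ℕ := fun x =>
    if h : ∃ i, i ≤ 2*m ∧ r.getVert i = x then h.choose else 0 with hridx
  have ridx_spec : ∀ i, i ≤ 2*m → ridx (r.getVert i) = i := by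
    intro i hi
    have hex : ∃ j, j ≤ 2*m ∧ r.getVert j = r.getVert i := ⟨i, hi, rfl⟩
    rw [hridx]; simp only [hex, dif_pos]
    exact rinj _ i hex.choose_spec.1 hi hex.choose_spec.2
  -- abbreviations (written out in full below)
  -- list evaluation
  have hLu : thList u v a b (r.getVert (2*m-2)) (r.getVert (2*m-1)) u = {1,2} := by
    unfold thList; rw [if_pos rfl]
  have hLv : thList u v a b (r.getVert (2*m-2)) (r.getVert (2*m-1)) v = {1,3} := by
    unfold thList; rw [if_neg (Ne.symm huv), if_pos rfl]
  have hLa : thList u v a b (r.getVert (2*m-2)) (r.getVert (2*m-1)) a = {1,2} := by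
    unfold thList; rw [if_neg hau, if_neg hav, if_pos rfl]
  have hLb : thList u v a b (r.getVert (2*m-2)) (r.getVert (2*m-1)) b = {2,3} := by
    unfold thList; rw [if_neg hbu, if_neg hbv, if_neg (Ne.symm hab), if_pos rfl]
  have hLr : ∀ j, j ≤ 2*m →
      thList u v a b (r.getVert (2*m-2)) (r.getVert (2*m-1)) (r.getVert j) = thL m j := by
    intro j hj
    rcases eq_or_ne j 0 with h0 | h0
    · subst h0; rw [Walk.getVert_zero, hLu]
      unfold thL; rw [if_pos rfl]
    rcases eq_or_ne j (2*m) with h2m | h2m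
    · subst h2m; rw [hr2m, hLv]
      unfold thL
      rw [if_neg (by omega), if_pos rfl]
    obtain ⟨hu', hv', ha', hb'⟩ := rint j (by omega) (by omega)
    unfold thList thL; rw [if_neg hu', if_neg hv', if_neg ha', if_neg hb',
      if_neg h0, if_neg h2m]
    rcases eq_or_ne j (2*m-2) with h2 | h2
    · rw [if_pos (by rw [h2]), if_pos h2]
    have h2' : r.getVert j ≠ r.getVert (2*m-2) :=
      fun hh => h2 (rinj _ _ (by omega) (by omega) hh)
    rw [if_neg h2', if_neg h2]
    rcases eq_or_ne j (2*m-1) with h3 | h3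
    · rw [if_pos (by rw [h3]), if_pos h3]
    have h3' : r.getVert j ≠ r.getVert (2*m-1) :=
      fun hh => h3 (rinj _ _ (by omega) (by omega) hh)
    rw [if_neg h3', if_neg h3]
  -- coloring evaluation
  have hCu : thCol u v a b (r.getVert (2*m-2)) (r.getVert (2*m-1)) ridx u = 1 := by
    unfold thCol; rw [if_pos rfl]
  have hCv : thCol u v a b (r.getVert (2*m-2)) (r.getVert (2*m-1)) ridx v = 3 := by
    unfold thCol; rw [if_neg (Ne.symm huv), if_pos rfl]
  have hCa : thCol u v a b (r.getVert (2*m-2)) (r.getVert (2*m-1)) ridx a = 2 := by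
    unfold thCol; rw [if_neg hau, if_neg hav, if_pos rfl]
  have hCb : thCol u v a b (r.getVert (2*m-2)) (r.getVert (2*m-1)) ridx b = 2 := by
    unfold thCol; rw [if_neg hbu, if_neg hbv, if_neg (Ne.symm hab), if_pos rfl]
  have hCr : ∀ j, j ≤ 2*m →
      thCol u v a b (r.getVert (2*m-2)) (r.getVert (2*m-1)) ridx (r.getVert j) = thVal m j := by
    intro j hj
    rcases eq_or_ne j 0 with h0 | h0
    · subst h0; rw [Walk.getVert_zero, hCu]
      unfold thVal; rw [if_pos rfl]
    rcases eq_or_ne j (2*m) with h2m | h2m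
    · subst h2m; rw [hr2m, hCv]
      unfold thVal
      rw [if_neg (by omega), if_pos rfl]
    obtain ⟨hu', hv', ha', hb'⟩ := rint j (by omega) (by omega)
    unfold thCol thVal; rw [if_neg hu', if_neg hv', if_neg ha', if_neg hb',
      if_neg h0, if_neg h2m]
    rcases eq_or_ne j (2*m-2) with h2 | h2
    · rw [if_pos (by rw [h2]), if_pos h2]
    have h2' : r.getVert j ≠ r.getVert (2*m-2) :=
      fun hh => h2 (rinj _ _ (by omega) (by omega) hh)
    rw [if_neg h2', if_neg h2]
    rcases eq_or_ne j (2*m-1) with h3 | h3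
    · rw [if_pos (by rw [h3]), if_pos h3]
    have h3' : r.getVert j ≠ r.getVert (2*m-1) :=
      fun hh => h3 (rinj _ _ (by omega) (by omega) hh)
    rw [if_neg h3', if_neg h3, ridx_spec j hj]
  -- every edge of G is a path/q/r edge with explicit endpoints
  have key : ∀ y z : V, G.Adj y z →
      (∃ i, i < 2*m ∧ s(y,z) = s(r.getVert i, r.getVert (i+1))) ∨
      (s(y,z) = s(u,a) ∨ s(y,z) = s(a,v) ∨ s(y,z) = s(u,b) ∨ s(y,z) = s(b,v)) := by
    intro y z hyz
    have he := (hedge s(y,z)).mp hyz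
    rcases he with he | he | he
    · right
      obtain ⟨i, hi, hei⟩ := myEdgesGetVert p _ he
      rw [hpl] at hi
      interval_cases i
      · left; rw [hei, Walk.getVert_zero]
      · right; left; rw [hei, show (1:ℕ)+1 = 2 from rfl, hp2]
    · right
      obtain ⟨i, hi, hei⟩ := myEdgesGetVert q _ he
      rw [hql] at hi
      interval_cases i
      · right; right; left; rw [hei, Walk.getVert_zero]
      · right; right; right; rw [hei, show (1:ℕ)+1 = 2 from rfl, hq2]
    · left
      obtain ⟨i, hi, hei⟩ := myEdgesGetVert r _ he
      rw [hrl] at hi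
      exact ⟨i, hi, hei⟩
    -- properness of the canonical coloring
  have hCprop : ∀ y z : V, G.Adj y z →
      thCol u v a b (r.getVert (2*m-2)) (r.getVert (2*m-1)) ridx y ≠
      thCol u v a b (r.getVert (2*m-2)) (r.getVert (2*m-1)) ridx z := by
    intro y z hyz
    rcases key y z hyz with ⟨i, hi, hei⟩ | hei | hei | hei | hei
    · rcases Sym2.eq_iff.mp hei with ⟨hy, hz⟩ | ⟨hy, hz⟩
      · rw [hy, hz, hCr i (by omega), hCr (i+1) (by omega)]
        exact thVal_ne m hm i hi
      · rw [hy, hz, hCr (i+1) (by omega), hCr i (by omega)]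
        exact (thVal_ne m hm i hi).symm
    · rcases Sym2.eq_iff.mp hei with ⟨hy, hz⟩ | ⟨hy, hz⟩ <;> rw [hy, hz, hCu, hCa] <;> omega
    · rcases Sym2.eq_iff.mp hei with ⟨hy, hz⟩ | ⟨hy, hz⟩ <;> rw [hy, hz, hCa, hCv] <;> omega
    · rcases Sym2.eq_iff.mp hei with ⟨hy, hz⟩ | ⟨hy, hz⟩ <;> rw [hy, hz, hCu, hCb] <;> omega
    · rcases Sym2.eq_iff.mp hei with ⟨hy, hz⟩ | ⟨hy, hz⟩ <;> rw [hy, hz, hCb, hCv] <;> omega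
  -- uniqueness of the canonical coloring
  have uniq : ∀ γ : V → ℕ,
      (∀ x, γ x ∈ thList u v a b (r.getVert (2*m-2)) (r.getVert (2*m-1)) x) →
      (∀ y z, G.Adj y z → γ y ≠ γ z) →
      γ = thCol u v a b (r.getVert (2*m-2)) (r.getVert (2*m-1)) ridx := by
    intro γ hmemb hprop
    have mu : γ u = 1 ∨ γ u = 2 := by have := hmemb u; rw [hLu] at this; simpa using this
    have mv : γ v = 1 ∨ γ v = 3 := by have := hmemb v; rw [hLv] at this; simpa using this
    have ma : γ a = 1 ∨ γ a = 2 := by have := hmemb a; rw [hLa] at this; simpa using this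
    have mb : γ b = 2 ∨ γ b = 3 := by have := hmemb b; rw [hLb] at this; simpa using this
    have nua := hprop u a adj_ua
    have nav := hprop a v adj_av
    have nub := hprop u b adj_ub
    have nbv := hprop b v adj_bv
    have hu1 : γ u = 1 := by omega
    have hchain : ∀ j, j ≤ 2*m → γ (r.getVert j) = thVal m j := by
      intro j
      induction j with
      | zero => intro _; rw [Walk.getVert_zero, thVal_zero]; exact hu1
      | succ i ih =>
        intro hij
        have h1 := ih (by omega)
        have hne := hprop _ _ (adj_r i (by omega))
        have hmm := hmemb (r.getVert (i+1))
        rw [hLr (i+1) (by omega)] at hmm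
        exact thStep m hm i (by omega) _ hmm (h1 ▸ hne.symm)
    have hval2m : thVal m (2*m) = 3 := by unfold thVal; split_ifs <;> omega
    have hv3 : γ v = 3 := by
      have := hchain (2*m) le_rfl; rw [hr2m, hval2m] at this; exact this
    have ha2 : γ a = 2 := by omega
    have hb2 : γ b = 2 := by omega
    funext x
    rcases hvert x with hx | hx | hx
    · rcases psupp x hx with rfl | rfl | rfl
      · rw [hu1, hCu]
      · rw [ha2, hCa]
      · rw [hv3, hCv]
    · rcases qsupp x hx with rfl | rfl | rfl
      · rw [hu1, hCu]
      · rw [hb2, hCb]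
      · rw [hv3, hCv]
    · obtain ⟨i, hi, hxi⟩ := rsupp x hx
      rw [← hxi, hchain i hi, hCr i hi]
  constructor
  · refine ⟨thList u v a b (r.getVert (2*m-2)) (r.getVert (2*m-1)),
      fun x => thList_card _ _ _ _ _ _ x, ?_⟩
    unfold colCount
    rw [Finset.card_eq_one]
    refine ⟨thCol u v a b (r.getVert (2*m-2)) (r.getVert (2*m-1)) ridx, ?_⟩
    ext γ
    simp only [Finset.mem_filter, Fintype.mem_piFinset, Finset.mem_singleton]
    constructor
    · rintro ⟨h1, h2⟩; exact uniq γ h1 h2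
    · rintro rfl
      exact ⟨fun x => thCol_mem _ _ _ _ _ _ _ x, hCprop⟩
  · -- part 2 : constant lists {1,2}
    have h12 : ∀ t : ℕ, t ∈ ({1,2} : Finset ℕ) ↔ t = 1 ∨ t = 2 := by intro t; simp
    have hδu : ∀ c, thCol2 c u v a b ridx u = c := by
      intro c; unfold thCol2; rw [if_pos rfl]
    have hδv : ∀ c, thCol2 c u v a b ridx v = c := by
      intro c; unfold thCol2; rw [if_neg (Ne.symm huv), if_pos rfl]
    have hδa : ∀ c, thCol2 c u v a b ridx a = 3 - c := by
      intro c; unfold thCol2; rw [if_neg hau, if_neg hav, if_pos rfl]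
    have hδb : ∀ c, thCol2 c u v a b ridx b = 3 - c := by
      intro c; unfold thCol2; rw [if_neg hbu, if_neg hbv, if_neg (Ne.symm hab), if_pos rfl]
    have hδr : ∀ c, ∀ j, j ≤ 2*m → thCol2 c u v a b ridx (r.getVert j) =
        (if j % 2 = 1 then 3 - c else c) := by
      intro c j hj
      rcases eq_or_ne j 0 with h0 | h0
      · subst h0; rw [Walk.getVert_zero, hδu, if_neg (by omega)]
      rcases eq_or_ne j (2*m) with h2m | h2m
      · subst h2m; rw [hr2m, hδv, if_neg (by omega)]
      obtain ⟨hu', hv', ha', hb'⟩ := rint j (by omega) (by omega)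
      unfold thCol2
      rw [if_neg hu', if_neg hv', if_neg ha', if_neg hb', ridx_spec j hj]
    have hδprop : ∀ c, c = 1 ∨ c = 2 → ∀ y z, G.Adj y z →
        thCol2 c u v a b ridx y ≠ thCol2 c u v a b ridx z := by
      intro c hc y z hyz
      rcases key y z hyz with ⟨i, hi, hei⟩ | hei | hei | hei | hei
      · have e1 := hδr c i (by omega)
        have e2 := hδr c (i+1) (by omega)
        rcases Sym2.eq_iff.mp hei with ⟨hy, hz⟩ | ⟨hy, hz⟩ <;> rw [hy, hz, e1, e2] <;>
          split_ifs <;> omega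
      · rcases Sym2.eq_iff.mp hei with ⟨hy, hz⟩ | ⟨hy, hz⟩ <;> rw [hy, hz, hδu c, hδa c] <;> omega
      · rcases Sym2.eq_iff.mp hei with ⟨hy, hz⟩ | ⟨hy, hz⟩ <;> rw [hy, hz, hδa c, hδv c] <;> omega
      · rcases Sym2.eq_iff.mp hei with ⟨hy, hz⟩ | ⟨hy, hz⟩ <;> rw [hy, hz, hδu c, hδb c] <;> omega
      · rcases Sym2.eq_iff.mp hei with ⟨hy, hz⟩ | ⟨hy, hz⟩ <;> rw [hy, hz, hδb c, hδv c] <;> omega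
    have huniq2 : ∀ γ : V → ℕ, (∀ x, γ x ∈ ({1,2} : Finset ℕ)) →
        (∀ y z, G.Adj y z → γ y ≠ γ z) → γ = thCol2 (γ u) u v a b ridx := by
      intro γ hmemb hprop
      have mu := (h12 _).mp (hmemb u)
      have ma := (h12 _).mp (hmemb a)
      have mb := (h12 _).mp (hmemb b)
      have nua := hprop u a adj_ua
      have nub := hprop u b adj_ub
      have hchain : ∀ j, j ≤ 2*m →
          γ (r.getVert j) = (if j % 2 = 1 then 3 - γ u else γ u) := by
        intro j
        induction j with
        | zero => intro _; rw [Walk.getVert_zero, if_neg (by omega)]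
        | succ i ih =>
          intro hij
          have h1 := ih (by omega)
          have hne := hprop _ _ (adj_r i (by omega))
          have mm := (h12 _).mp (hmemb (r.getVert (i+1)))
          rw [h1] at hne
          split_ifs at hne ⊢ <;> omega
      have hveq : γ v = γ u := by
        have := hchain (2*m) le_rfl
        rw [hr2m] at this
        rw [this, if_neg (by omega)]
      have ha' : γ a = 3 - γ u := by omega
      have hb' : γ b = 3 - γ u := by omega
      funext x
      rcases hvert x with hx | hx | hx
      · rcases psupp x hx with rfl | rfl | rfl
        · rw [hδu]
        · rw [ha', hδa]
        · rw [hveq, hδv]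
      · rcases qsupp x hx with rfl | rfl | rfl
        · rw [hδu]
        · rw [hb', hδb]
        · rw [hveq, hδv]
      · obtain ⟨i, hi, hxi⟩ := rsupp x hx
        rw [← hxi, hchain i hi, hδr (γ u) i hi]
    unfold colCount
    rw [Finset.card_eq_two]
    refine ⟨thCol2 1 u v a b ridx, thCol2 2 u v a b ridx, ?_, ?_⟩
    · intro h
      have h' := congrFun h u
      rw [hδu 1, hδu 2] at h'
      omega
    · ext γ
      simp only [Finset.mem_filter, Fintype.mem_piFinset, Finset.mem_insert,
        Finset.mem_singleton]
      constructor
      · rintro ⟨h1, h2⟩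
        have hγ := huniq2 γ (fun x => (h12 _).mpr (h1 x)) h2
        rcases h1 u with hcu | hcu
        · left; rw [hγ, hcu]
        · right; rw [hγ, hcu]
      · rintro (rfl | rfl)
        · exact ⟨fun x => by unfold thCol2; split_ifs <;> decide, hδprop 1 (Or.inl rfl)⟩
        · exact ⟨fun x => by unfold thCol2; split_ifs <;> decide, hδprop 2 (Or.inr rfl)⟩
end

section
/- Let L be a list assignment for K_{n,n^n} with |L(v)| ≥ n for every vertex v, and suppose col(K_{n,n^n}, L) = 0. Then: the lists of the n vertices on the small side are pairwise disjoint n-element sets, and the lists of the n^n vertices on the large side are exactly the n^n distinct transversals, each consisting of exactly one color from each small-side list. -/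
open SimpleGraph

theorem stmt16 (n : ℕ) (hn : 1 ≤ n) (L : Fin n ⊕ Fin (n ^ n) → Finset ℕ)
    (hcard : ∀ v, n ≤ (L v).card)
    (hzero : colCount (completeBipartiteGraph (Fin n) (Fin (n ^ n))) L = 0) :
    (∀ i : Fin n, (L (.inl i)).card = n) ∧
    (∀ i j : Fin n, i ≠ j → Disjoint (L (.inl i)) (L (.inl j))) ∧
    (∀ b : Fin (n ^ n),
      L (.inr b) ⊆ Finset.univ.biUnion (fun i : Fin n => L (.inl i)) ∧
      ∀ i : Fin n, (L (.inr b) ∩ L (.inl i)).card = 1) ∧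
    (∀ b b' : Fin (n ^ n), b ≠ b' → L (.inr b) ≠ L (.inr b')) := by
  classical
  -- every transversal of the small-side lists is "killed" by some big-side list
  have kill : ∀ f : Fin n → ℕ, (∀ i, f i ∈ L (.inl i)) →
      ∃ b : Fin (n ^ n), L (.inr b) ⊆ Finset.image f Finset.univ := by
    intro f hf
    by_contra h
    push_neg at h
    have h' : ∀ b, ∃ c ∈ L (.inr b), c ∉ Finset.image f Finset.univ := by
      intro b
      exact Finset.not_subset.mp (h b)
    choose g hg1 hg2 using h'
    rw [colCount, Finset.card_eq_zero, Finset.eq_empty_iff_forall_notMem] at hzero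
    refine hzero (Sum.elim f g) (Finset.mem_filter.mpr ⟨?_, ?_⟩)
    · refine (@Fintype.mem_piFinset _ (fun a b => Classical.propDecidable (a = b)) _ _ _ _).mpr ?_
      rintro (i | b)
      · exact hf i
      · exact hg1 b
    · rintro (i | b) (j | b') hadj
      · simp at hadj
      · simp only [Sum.elim_inl, Sum.elim_inr]
        intro hEq
        apply hg2 b'
        rw [← hEq]
        exact Finset.mem_image_of_mem f (Finset.mem_univ i)
      · simp only [Sum.elim_inl, Sum.elim_inr]
        intro hEq
        apply hg2 b
        rw [hEq]
        exact Finset.mem_image_of_mem f (Finset.mem_univ j)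
      · simp at hadj
  have hne : ∀ a : Fin n, (L (.inl a)).Nonempty := fun a =>
    Finset.card_pos.mp (lt_of_lt_of_le hn (hcard _))
  -- disjointness of small-side lists
  have hdisj : ∀ i j : Fin n, i ≠ j → Disjoint (L (.inl i)) (L (.inl j)) := by
    intro i j hij
    rw [Finset.disjoint_left]
    intro c hci hcj
    by_contra _
    set f : Fin n → ℕ := fun a => if a = i ∨ a = j then c else (hne a).choose with hfdef
    have hf : ∀ a, f a ∈ L (.inl a) := by
      intro a
      by_cases h : a = i ∨ a = j
      · have : f a = c := by simp [hfdef, h]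
        rw [this]
        rcases h with rfl | rfl
        · exact hci
        · exact hcj
      · have : f a = (hne a).choose := by simp [hfdef, h]
        rw [this]
        exact (hne a).choose_spec
    obtain ⟨b, hb⟩ := kill f hf
    have himg : Finset.image f Finset.univ ⊆ Finset.image f (Finset.univ.erase i) := by
      intro x hx
      obtain ⟨a, _, rfl⟩ := Finset.mem_image.mp hx
      by_cases ha : a = i
      · have h1 : f a = f j := by simp [hfdef, ha]
        rw [h1]
        exact Finset.mem_image_of_mem f (Finset.mem_erase.mpr ⟨Ne.symm hij, Finset.mem_univ j⟩)
      · exact Finset.mem_image_of_mem f (Finset.mem_erase.mpr ⟨ha, Finset.mem_univ a⟩)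
    have h1 : n ≤ (Finset.image f (Finset.univ.erase i)).card :=
      le_trans (hcard _) (Finset.card_le_card (hb.trans himg))
    have h2 : (Finset.image f (Finset.univ.erase i)).card ≤ n - 1 := by
      calc (Finset.image f (Finset.univ.erase i)).card ≤ (Finset.univ.erase i).card :=
            Finset.card_image_le
        _ = n - 1 := by rw [Finset.card_erase_of_mem (Finset.mem_univ i)]; simp
    omega
  -- transversals are injective, and are determined by their image
  have hinjf : ∀ f g : Fin n → ℕ, (∀ i, f i ∈ L (.inl i)) → (∀ i, g i ∈ L (.inl i)) →
      Finset.image f Finset.univ = Finset.image g Finset.univ → f = g := by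
    intro f g hf hg hfg
    funext a
    have : f a ∈ Finset.image g Finset.univ := hfg ▸ Finset.mem_image_of_mem f (Finset.mem_univ a)
    obtain ⟨a', _, ha'⟩ := Finset.mem_image.mp this
    by_cases h : a' = a
    · exact (h ▸ ha').symm
    · have hx : f a ∈ L (.inl a') := ha' ▸ hg a'
      exact absurd (hf a) (Finset.disjoint_left.mp (hdisj a' a h) hx)
  have hinj_on : ∀ f : Fin n → ℕ, (∀ i, f i ∈ L (.inl i)) →
      (Finset.image f Finset.univ).card = n := by
    intro f hf
    rw [Finset.card_image_of_injOn, Finset.card_univ, Fintype.card_fin]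
    intro a _ a' _ hEq
    by_contra h
    have hx : f a ∈ L (.inl a') := by rw [hEq]; exact hf a'
    exact absurd hx (Finset.disjoint_left.mp (hdisj a a' h) (hf a))
  -- the killing list equals the image of the transversal
  have killEq : ∀ f : Fin n → ℕ, ∀ hf : (∀ i, f i ∈ L (.inl i)),
      L (.inr (kill f hf).choose) = Finset.image f Finset.univ := by
    intro f hf
    refine Finset.eq_of_subset_of_card_le (kill f hf).choose_spec ?_
    rw [hinj_on f hf]
    exact hcard _
  set T : Finset (Fin n → ℕ) := Fintype.piFinset (fun i => L (.inl i)) with hT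
  have hmemT : ∀ f : Fin n → ℕ, f ∈ T ↔ ∀ i, f i ∈ L (.inl i) := by
    intro f; rw [hT, Fintype.mem_piFinset]
  have hTcard : T.card = ∏ i : Fin n, (L (.inl i)).card := Fintype.card_piFinset _
  -- injectivity of the kill map on transversals
  have Kinj : ∀ f₁ f₂ (h₁ : f₁ ∈ T) (h₂ : f₂ ∈ T),
      (kill f₁ ((hmemT f₁).mp h₁)).choose = (kill f₂ ((hmemT f₂).mp h₂)).choose → f₁ = f₂ := by
    intro f₁ f₂ h₁ h₂ hEq
    apply hinjf f₁ f₂ ((hmemT f₁).mp h₁) ((hmemT f₂).mp h₂)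
    rw [← killEq f₁ ((hmemT f₁).mp h₁), ← killEq f₂ ((hmemT f₂).mp h₂), hEq]
  -- counting: the product of list sizes is at most n^n
  have hcount : T.card ≤ n ^ n := by
    have := Finset.card_le_card_of_injOn
      (f := fun f => if h : ∀ i, f i ∈ L (.inl i) then (kill f h).choose
        else ⟨0, Nat.pow_pos hn⟩)
      (s := T) (t := Finset.univ) (fun f _ => Finset.mem_univ _) ?_
    · simpa using this
    · intro f₁ h₁ f₂ h₂ hEq
      have hf₁ := (hmemT f₁).mp h₁
      have hf₂ := (hmemT f₂).mp h₂
      simp only [dif_pos hf₁, dif_pos hf₂] at hEq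
      exact Kinj f₁ f₂ h₁ h₂ hEq
  -- each small list has exactly n elements
  have hcards : ∀ i : Fin n, (L (.inl i)).card = n := by
    intro i₀
    by_contra h
    have hgt : n + 1 ≤ (L (.inl i₀)).card := by
      have := hcard (Sum.inl i₀); omega
    have hrest : n ^ (n - 1) ≤ ∏ i ∈ Finset.univ.erase i₀, (L (.inl i)).card := by
      calc n ^ (n - 1) = ∏ _i ∈ Finset.univ.erase i₀, n := by
            rw [Finset.prod_const, Finset.card_erase_of_mem (Finset.mem_univ i₀)]
            simp
        _ ≤ _ := Finset.prod_le_prod (fun _ _ => Nat.zero_le _) (fun i _ => hcard _)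
    have : (n + 1) * n ^ (n - 1) ≤ ∏ i : Fin n, (L (.inl i)).card := by
      calc (n + 1) * n ^ (n - 1)
          ≤ (L (.inl i₀)).card * ∏ i ∈ Finset.univ.erase i₀, (L (.inl i)).card :=
            Nat.mul_le_mul hgt hrest
        _ = _ := Finset.mul_prod_erase Finset.univ
              (fun i => (L (Sum.inl i)).card) (Finset.mem_univ i₀)
    have hpow : n * n ^ (n - 1) = n ^ n := by
      rw [mul_comm, ← pow_succ, Nat.sub_add_cancel hn]
    have hposp : 0 < n ^ (n - 1) := Nat.pow_pos hn
    have h2 : (n + 1) * n ^ (n - 1) ≤ n * n ^ (n - 1) := by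
      rw [hpow]
      exact le_trans this (hTcard ▸ hcount)
    have := Nat.le_of_mul_le_mul_right h2 hposp
    omega
  -- T has exactly n^n elements, so the kill map is a bijection; every big list is an image
  have hTn : T.card = n ^ n := by
    rw [hTcard]
    calc ∏ i : Fin n, (L (.inl i)).card = ∏ _i : Fin n, n :=
          Finset.prod_congr rfl (fun i _ => hcards i)
      _ = n ^ n := by rw [Finset.prod_const, Finset.card_univ, Fintype.card_fin]
  have hsurj : ∀ b : Fin (n ^ n), ∃ f : Fin n → ℕ, ∃ hf : ∀ i, f i ∈ L (.inl i),
      (kill f hf).choose = b := by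
    intro b
    have := Finset.surj_on_of_inj_on_of_card_le (s := T) (t := Finset.univ)
      (fun f hf => (kill f ((hmemT f).mp hf)).choose)
      (fun _ _ => Finset.mem_univ _) Kinj
      (by rw [hTn]; simp) b (Finset.mem_univ b)
    obtain ⟨f, hfT, hfb⟩ := this
    exact ⟨f, (hmemT f).mp hfT, hfb.symm⟩
  refine ⟨hcards, hdisj, ?_, ?_⟩
  · intro b
    obtain ⟨f, hf, hfb⟩ := hsurj b
    have hLb : L (.inr b) = Finset.image f Finset.univ := by
      rw [← hfb]; exact killEq f hf
    constructor
    · intro x hx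
      rw [hLb] at hx
      obtain ⟨a, _, rfl⟩ := Finset.mem_image.mp hx
      exact Finset.mem_biUnion.mpr ⟨a, Finset.mem_univ a, hf a⟩
    · intro i
      have : L (.inr b) ∩ L (.inl i) = {f i} := by
        ext x
        rw [Finset.mem_inter, hLb, Finset.mem_singleton]
        constructor
        · rintro ⟨hx1, hx2⟩
          obtain ⟨a, _, rfl⟩ := Finset.mem_image.mp hx1
          by_cases h : a = i
          · rw [h]
          · exact absurd hx2 (Finset.disjoint_left.mp (hdisj a i h) (hf a))
        · rintro rfl
          exact ⟨Finset.mem_image_of_mem f (Finset.mem_univ i), hf i⟩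
      rw [this, Finset.card_singleton]
  · intro b b' hbb' hEq
    obtain ⟨f, hf, hfb⟩ := hsurj b
    obtain ⟨f', hf', hfb'⟩ := hsurj b'
    have h1 : L (.inr b) = Finset.image f Finset.univ := by rw [← hfb]; exact killEq f hf
    have h2 : L (.inr b') = Finset.image f' Finset.univ := by rw [← hfb']; exact killEq f' hf'
    have hff : f = f' := hinjf f f' hf hf' (by rw [← h1, ← h2, hEq])
    subst hff
    exact hbb' (hfb.symm.trans hfb')
end
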